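/- (Theorem 1) Let α, β ∈ ℂ with α ≠ 0 and β ≠ 0, let 𝔻 be a two-mode displacement operator with parameters (−α/2, −β/2), and let φ ∈ ℓ²(ℕ×ℕ, ℂ) with ‖φ‖ = 1 satisfy: (i) Ω₁ φ = φ; (ii) Ω₂ φ = φ; (iii) (𝔻 φ)(n,m) = 0 for all (n,m) with n+m odd (i.e. φ is fixed by the displaced even-parity projection Ω₃ = 𝔻⁻¹ ∘ P_even ∘ 𝔻). Then there exists c ∈ ℂ with |c| = 1 such that φ = c • ψ^ECS_{α,β}, where ψ^ECS_{α,β} = (2(1 + exp(−(|α|²+|β|²)/2)))^{−1/2} • (coh α ⊠ coh 0 + coh 0 ⊠ coh β). -/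

import Mathlib

open scoped ComplexConjugate ENNReal

/-- The components of the coherent state `|α⟩`: `exp(−|α|²/2)·αⁿ/√(n!)`. -/
noncomputable def cohFun (α : ℂ) : ℕ → ℂ := fun n =>
  (Real.exp (-‖α‖ ^ 2 / 2) / Real.sqrt (Nat.factorial n) : ℝ) * α ^ n

lemma cohFun_memℓp (α : ℂ) : Memℓp (cohFun α) 2 := by
  apply memℓp_gen
  have h : Summable (fun n : ℕ =>
      Real.exp (-‖α‖ ^ 2 / 2) ^ 2 * ((‖α‖ ^ 2) ^ n / (Nat.factorial n))) :=
    (Real.summable_pow_div_factorial (‖α‖ ^ 2)).mul_left _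
  refine h.congr fun n => ?_
  have h2 : ((2 : ℝ≥0∞).toReal) = (2 : ℝ) := by norm_num
  rw [h2, Real.rpow_two]
  have hn : ‖cohFun α n‖ = Real.exp (-‖α‖ ^ 2 / 2) / Real.sqrt (Nat.factorial n) * ‖α‖ ^ n := by
    simp only [cohFun, norm_mul, norm_pow, Complex.norm_real, Real.norm_eq_abs]
    rw [abs_of_pos (by positivity)]
  rw [hn, mul_pow, div_pow, Real.sq_sqrt (by positivity), pow_right_comm]
  ring

/-- The coherent state `|α⟩` as an element of `ℓ²(ℕ, ℂ)`. -/
noncomputable def coh (α : ℂ) : lp (fun _ : ℕ => ℂ) 2 := ⟨cohFun α, cohFun_memℓp α⟩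

/-- The product state `ψ ⊠ χ` in the two-mode space `ℓ²(ℕ×ℕ, ℂ)`,
with components `(ψ ⊠ χ)(n, m) = ψ n · χ m`. -/
noncomputable def tmul (ψ χ : lp (fun _ : ℕ => ℂ) 2) : lp (fun _ : ℕ × ℕ => ℂ) 2 :=
  ⟨fun q => ψ q.1 * χ q.2, by
    apply memℓp_gen
    have hψ := (lp.memℓp ψ).summable (p := 2) (by norm_num)
    have hχ := (lp.memℓp χ).summable (p := 2) (by norm_num)
    refine (hψ.mul_of_nonneg hχ (fun n => Real.rpow_nonneg (norm_nonneg _) _)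
      (fun n => Real.rpow_nonneg (norm_nonneg _) _)).congr fun q => ?_
    rw [norm_mul, Real.mul_rpow (norm_nonneg _) (norm_nonneg _)]⟩

/-- A two-mode displacement operator with parameters `(γ, δ)`: a linear isometric
equivalence of `ℓ²(ℕ×ℕ, ℂ)` acting on product coherent states in the prescribed way. -/
def IsTwoModeDisplacement
    (𝔻 : lp (fun _ : ℕ × ℕ => ℂ) 2 ≃ₗᵢ[ℂ] lp (fun _ : ℕ × ℕ => ℂ) 2) (γ δ : ℂ) : Prop :=
  ∀ β β' : ℂ, 𝔻 (tmul (coh β) (coh β')) =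
    Complex.exp ((γ * conj β - conj γ * β) / 2 + (δ * conj β' - conj δ * β') / 2) •
      tmul (coh (γ + β)) (coh (δ + β'))

open scoped InnerProductSpace

section ECSAux

lemma coh_apply (γ : ℂ) (n : ℕ) : coh γ n = cohFun γ n := rfl

lemma tmul_apply (ψ χ : lp (fun _ : ℕ => ℂ) 2) (q : ℕ × ℕ) :
    tmul ψ χ q = ψ q.1 * χ q.2 := rfl

lemma cohFun_zero' (n : ℕ) : cohFun 0 n = if n = 0 then 1 else 0 := by
  rcases n with _ | n <;> simp [cohFun, Real.sqrt_one]

lemma cohFun_apply_zero (γ : ℂ) : cohFun γ 0 = (Real.exp (-‖γ‖ ^ 2 / 2) : ℝ) := by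
  simp [cohFun]

lemma cohFun_apply_one (γ : ℂ) : cohFun γ 1 = (Real.exp (-‖γ‖ ^ 2 / 2) : ℝ) * γ := by
  simp [cohFun]

lemma cohFun_ne_zero (γ : ℂ) (hγ : γ ≠ 0) (n : ℕ) : cohFun γ n ≠ 0 := by
  unfold cohFun
  apply mul_ne_zero
  · exact_mod_cast ne_of_gt (by positivity : (0:ℝ) < Real.exp (-‖γ‖ ^ 2 / 2) / Real.sqrt (Nat.factorial n))
  · exact pow_ne_zero n hγ

lemma real_exp_tsum (x : ℝ) : ∑' n : ℕ, x ^ n / (Nat.factorial n : ℝ) = Real.exp x := by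
  rw [Real.exp_eq_exp_ℝ, NormedSpace.exp_eq_tsum_div]

lemma norm_coh (γ : ℂ) : ‖coh γ‖ = 1 := by
  have h := lp.norm_rpow_eq_tsum (p := 2) (by norm_num) (coh γ)
  have h2 : ((2 : ℝ≥0∞).toReal) = (2 : ℝ) := by norm_num
  rw [h2] at h
  have hsq : ‖coh γ‖ ^ 2 = 1 := by
    rw [← Real.rpow_two, h]
    have hpt : ∀ n : ℕ, ‖(coh γ) n‖ ^ (2:ℝ)
        = Real.exp (-‖γ‖ ^ 2) * ((‖γ‖ ^ 2) ^ n / (Nat.factorial n)) := by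
      intro n
      rw [Real.rpow_two, coh_apply]
      have hn : ‖cohFun γ n‖ = Real.exp (-‖γ‖ ^ 2 / 2) / Real.sqrt (Nat.factorial n) * ‖γ‖ ^ n := by
        simp only [cohFun, norm_mul, norm_pow, Complex.norm_real, Real.norm_eq_abs]
        rw [abs_of_pos (by positivity)]
      rw [hn, mul_pow, div_pow, Real.sq_sqrt (by positivity), pow_right_comm]
      rw [show Real.exp (-‖γ‖ ^ 2 / 2) ^ 2 = Real.exp (-‖γ‖ ^ 2) from by
        rw [sq, ← Real.exp_add]; ring_nf]
      ring
    rw [tsum_congr hpt, tsum_mul_left, real_exp_tsum, ← Real.exp_add]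
    simp
  rw [← Real.sqrt_sq (norm_nonneg (coh γ)), hsq, Real.sqrt_one]

lemma tsum_factor (F G : ℕ → ℂ) (hs : Summable (fun q : ℕ × ℕ => F q.1 * G q.2))
    (hsb : Summable G) :
    (∑' q : ℕ × ℕ, F q.1 * G q.2) = (∑' n, F n) * (∑' m, G m) := by
  rw [Summable.tsum_prod' hs (fun n => (hsb.mul_left (F n) : Summable fun m => F n * G m))]
  rw [← tsum_mul_right]
  exact tsum_congr fun n =>
    show ∑' (m : ℕ), F n * G m = F n * ∑' (m : ℕ), G m from tsum_mul_left

lemma inner_tmul (a b c d : lp (fun _ : ℕ => ℂ) 2) :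
    ⟪tmul a b, tmul c d⟫_ℂ = ⟪a, c⟫_ℂ * ⟪b, d⟫_ℂ := by
  have hs : Summable (fun q : ℕ × ℕ =>
      ((starRingEnd ℂ) (a q.1) * c q.1) * ((starRingEnd ℂ) (b q.2) * d q.2)) := by
    have h := lp.summable_inner (𝕜 := ℂ) (tmul a b) (tmul c d)
    refine h.congr fun q => ?_
    simp only [RCLike.inner_apply, tmul_apply, map_mul]
    ring
  have hsb : Summable (fun m : ℕ => (starRingEnd ℂ) (b m) * d m) := by
    have h := lp.summable_inner (𝕜 := ℂ) b d
    exact h.congr fun m => by simp [RCLike.inner_apply]; ring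
  have key := tsum_factor (fun n => (starRingEnd ℂ) (a n) * c n)
    (fun m => (starRingEnd ℂ) (b m) * d m) hs hsb
  rw [lp.inner_eq_tsum, lp.inner_eq_tsum, lp.inner_eq_tsum]
  simp only [RCLike.inner_apply]
  have e1 : (∑' i : ℕ, c i * (starRingEnd ℂ) (a i)) = ∑' n : ℕ, (starRingEnd ℂ) (a n) * c n :=
    tsum_congr fun n => mul_comm _ _
  have e2 : (∑' i : ℕ, d i * (starRingEnd ℂ) (b i)) = ∑' m : ℕ, (starRingEnd ℂ) (b m) * d m :=
    tsum_congr fun m => mul_comm _ _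
  rw [e1, e2, ← key]
  exact tsum_congr fun q => by simp only [tmul_apply, map_mul]; ring

lemma inner_coh_zero_left (x : lp (fun _ : ℕ => ℂ) 2) : ⟪coh 0, x⟫_ℂ = x 0 := by
  rw [lp.inner_eq_tsum]
  simp only [RCLike.inner_apply]
  rw [tsum_eq_single 0]
  · simp [coh_apply, cohFun_zero']
  · intro n hn; simp [coh_apply, cohFun_zero', hn]

lemma inner_coh_zero_right (x : lp (fun _ : ℕ => ℂ) 2) : ⟪x, coh 0⟫_ℂ = conj (x 0) := by
  rw [lp.inner_eq_tsum]
  simp only [RCLike.inner_apply]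
  rw [tsum_eq_single 0]
  · simp [coh_apply, cohFun_zero']
  · intro n hn; simp [coh_apply, cohFun_zero', hn]

end ECSAux

set_option maxHeartbeats 1000000 in
/-- Theorem 1: a unit vector passing all three measurement settings of the
verification protocol equals the entangled coherent state `ψ^ECS_{α,β}` up to a phase. -/
theorem ecs_verification (α β : ℂ) (hα : α ≠ 0) (hβ : β ≠ 0)
    (𝔻 : lp (fun _ : ℕ × ℕ => ℂ) 2 ≃ₗᵢ[ℂ] lp (fun _ : ℕ × ℕ => ℂ) 2)
    (h𝔻 : IsTwoModeDisplacement 𝔻 (-α / 2) (-β / 2))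
    (Ω₁ Ω₂ : lp (fun _ : ℕ × ℕ => ℂ) 2 →L[ℂ] lp (fun _ : ℕ × ℕ => ℂ) 2)
    (hΩ₁ : ∀ (φ : lp (fun _ : ℕ × ℕ => ℂ) 2) (n m : ℕ),
      (Ω₁ φ) (n, m) = if n = 0 ∨ m = 0 then φ (n, m) else 0)
    (hΩ₂ : ∀ (φ : lp (fun _ : ℕ × ℕ => ℂ) 2) (n m : ℕ),
      (Ω₂ φ) (n, m)
        = coh β m * (∑' k : ℕ, conj (coh β k) * φ (n, k))
        + coh α n * (∑' k : ℕ, conj (coh α k) * φ (k, m))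
        - coh α n * coh β m * (∑' k : ℕ, ∑' l : ℕ, conj (coh α k) * conj (coh β l) * φ (k, l)))
    (φ : lp (fun _ : ℕ × ℕ => ℂ) 2) (hnorm : ‖φ‖ = 1)
    (h1 : Ω₁ φ = φ) (h2 : Ω₂ φ = φ)
    (h3 : ∀ n m : ℕ, Odd (n + m) → (𝔻 φ) (n, m) = 0) :
    ∃ c : ℂ, ‖c‖ = 1 ∧
      φ = c • (((Real.sqrt (2 * (1 + Real.exp (-(‖α‖ ^ 2 + ‖β‖ ^ 2) / 2))))⁻¹ : ℂ) •
        (tmul (coh α) (coh 0) + tmul (coh 0) (coh β))) := by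
  classical
  have hcane : ∀ n, cohFun α n ≠ 0 := cohFun_ne_zero α hα
  have hcbne : ∀ m, cohFun β m ≠ 0 := cohFun_ne_zero β hβ
  -- pointwise form of h1
  have h1' : ∀ n m : ℕ, 1 ≤ n → 1 ≤ m → φ (n, m) = 0 := by
    intro n m hn hm
    have h := hΩ₁ φ n m
    rw [h1] at h
    rw [h, if_neg]
    push_neg
    exact ⟨Nat.one_le_iff_ne_zero.mp hn, Nat.one_le_iff_ne_zero.mp hm⟩
  -- structure from Ω₂
  obtain ⟨u, v, key⟩ : ∃ u v : ℕ → ℂ, ∀ n m : ℕ,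
      φ (n, m) = u n * cohFun β m + cohFun α n * v m := by
    refine ⟨fun n => ∑' k : ℕ, conj (coh β k) * φ (n, k),
      fun m => (∑' k : ℕ, conj (coh α k) * φ (k, m))
        - cohFun β m * (∑' k : ℕ, ∑' l : ℕ, conj (coh α k) * conj (coh β l) * φ (k, l)),
      fun n m => ?_⟩
    have h := hΩ₂ φ n m
    rw [h2] at h
    rw [h, coh_apply, coh_apply]
    ring
  have E1 : ∀ n m : ℕ, 1 ≤ n → 1 ≤ m → u n * cohFun β m + cohFun α n * v m = 0 := by
    intro n m hn hm
    rw [← key n m]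
    exact h1' n m hn hm
  set c₀ : ℂ := -v 1 / cohFun β 1 with hc₀
  have hu : ∀ n, 1 ≤ n → u n = c₀ * cohFun α n := by
    intro n hn
    have e := E1 n 1 hn le_rfl
    rw [hc₀, div_mul_eq_mul_div, eq_div_iff (hcbne 1)]
    linear_combination e
  have hv : ∀ m, 1 ≤ m → v m = -(c₀ * cohFun β m) := by
    intro m hm
    have e := E1 1 m le_rfl hm
    rw [hu 1 le_rfl] at e
    have h := mul_eq_zero.mp (show cohFun α 1 * (v m + c₀ * cohFun β m) = 0 from by
      linear_combination e)
    rcases h with h | h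
    · exact absurd h (hcane 1)
    · linear_combination h
  set A : ℂ := c₀ * cohFun β 0 + v 0 with hA
  set B : ℂ := u 0 - c₀ * cohFun α 0 with hB
  have hφpt : ∀ n m : ℕ,
      φ (n, m) = A * (cohFun α n * cohFun 0 m) + B * (cohFun 0 n * cohFun β m) := by
    intro n m
    rcases Nat.eq_zero_or_pos n with hn | hn
    · rcases Nat.eq_zero_or_pos m with hm | hm
      · subst hn; subst hm
        rw [key 0 0, hA, hB]
        simp only [cohFun_zero']
        norm_num
        ring
      · subst hn
        rw [key 0 m, hv m hm, hB]
        simp only [cohFun_zero', if_neg (Nat.one_le_iff_ne_zero.mp hm)]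
        norm_num
        ring
    · rcases Nat.eq_zero_or_pos m with hm | hm
      · subst hm
        rw [key n 0, hu n hn, hA]
        simp only [cohFun_zero', if_neg (Nat.one_le_iff_ne_zero.mp hn)]
        norm_num
        ring
      · rw [h1' n m hn hm]
        simp only [cohFun_zero', if_neg (Nat.one_le_iff_ne_zero.mp hn),
          if_neg (Nat.one_le_iff_ne_zero.mp hm)]
        ring
  have hφlp : φ = A • tmul (coh α) (coh 0) + B • tmul (coh 0) (coh β) := by
    refine lp.ext (funext fun q => ?_)
    obtain ⟨n, m⟩ := q
    rw [lp.coeFn_add, lp.coeFn_smul, lp.coeFn_smul]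
    simp only [Pi.add_apply, Pi.smul_apply, smul_eq_mul]
    rw [hφpt n m, tmul_apply, tmul_apply, coh_apply, coh_apply, coh_apply, coh_apply]
  -- displaced states
  have hD1 : 𝔻 (tmul (coh α) (coh 0)) = tmul (coh (α / 2)) (coh (-β / 2)) := by
    have h := h𝔻 α 0
    have hexp : (-α / 2 * conj α - conj (-α / 2) * α) / 2
        + (-β / 2 * conj (0:ℂ) - conj (-β / 2) * 0) / 2 = 0 := by
      simp only [map_zero, map_neg, map_div₀, map_ofNat, mul_zero, zero_mul]
      ring
    rw [hexp, Complex.exp_zero, one_smul, show -α / 2 + α = α / 2 from by ring,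
      show -β / 2 + 0 = -β / 2 from by ring] at h
    exact h
  have hD2 : 𝔻 (tmul (coh 0) (coh β)) = tmul (coh (-α / 2)) (coh (β / 2)) := by
    have h := h𝔻 0 β
    have hexp : (-α / 2 * conj (0:ℂ) - conj (-α / 2) * 0) / 2
        + (-β / 2 * conj β - conj (-β / 2) * β) / 2 = 0 := by
      simp only [map_zero, map_neg, map_div₀, map_ofNat, mul_zero, zero_mul]
      ring
    rw [hexp, Complex.exp_zero, one_smul, show -α / 2 + 0 = -α / 2 from by ring,
      show -β / 2 + β = β / 2 from by ring] at h
    exact h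
  have hDφ : 𝔻 φ = A • tmul (coh (α / 2)) (coh (-β / 2)) + B • tmul (coh (-α / 2)) (coh (β / 2)) := by
    rw [hφlp, map_add, map_smul, map_smul, hD1, hD2]
  -- parity at (1,0) gives A = B
  have hAB : A = B := by
    have hodd := h3 1 0 (by norm_num)
    rw [hDφ] at hodd
    rw [lp.coeFn_add, lp.coeFn_smul, lp.coeFn_smul] at hodd
    simp only [Pi.add_apply, Pi.smul_apply, smul_eq_mul] at hodd
    rw [tmul_apply, tmul_apply, coh_apply, coh_apply, coh_apply, coh_apply] at hodd
    rw [cohFun_apply_one, cohFun_apply_one, cohFun_apply_zero, cohFun_apply_zero] at hodd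
    rw [show ‖-β / 2‖ = ‖β / 2‖ from by rw [neg_div, norm_neg],
      show ‖-α / 2‖ = ‖α / 2‖ from by rw [neg_div, norm_neg]] at hodd
    have hEa : (Real.exp (-‖α / 2‖ ^ 2 / 2) : ℂ) ≠ 0 :=
      Complex.ofReal_ne_zero.mpr (Real.exp_ne_zero _)
    have hEb : (Real.exp (-‖β / 2‖ ^ 2 / 2) : ℂ) ≠ 0 :=
      Complex.ofReal_ne_zero.mpr (Real.exp_ne_zero _)
    have hα2 : α / 2 ≠ 0 := div_ne_zero hα two_ne_zero
    have hfac : (A - B) * ((Real.exp (-‖α / 2‖ ^ 2 / 2) : ℂ)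
        * (Real.exp (-‖β / 2‖ ^ 2 / 2) : ℂ) * (α / 2)) = 0 := by
      linear_combination hodd
    rcases mul_eq_zero.mp hfac with h | h
    · exact sub_eq_zero.mp h
    · exact absurd h (by exact mul_ne_zero (mul_ne_zero hEa hEb) hα2)
  -- norm computation
  set E : ℝ := Real.exp (-(‖α‖ ^ 2 + ‖β‖ ^ 2) / 2) with hE
  have hφA : φ = A • (tmul (coh α) (coh 0) + tmul (coh 0) (coh β)) := by
    rw [smul_add]
    nth_rewrite 2 [hAB]
    exact hφlp
  have hin11 : ⟪tmul (coh α) (coh 0), tmul (coh α) (coh 0)⟫_ℂ = 1 := by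
    rw [inner_tmul, inner_coh_zero_left, inner_self_eq_norm_sq_to_K (𝕜 := ℂ), norm_coh, coh_apply]
    simp [cohFun_zero']
  have hin22 : ⟪tmul (coh 0) (coh β), tmul (coh 0) (coh β)⟫_ℂ = 1 := by
    rw [inner_tmul, inner_coh_zero_left, inner_self_eq_norm_sq_to_K (𝕜 := ℂ), norm_coh, coh_apply]
    simp [cohFun_zero']
  have hin12 : ⟪tmul (coh α) (coh 0), tmul (coh 0) (coh β)⟫_ℂ = (E : ℂ) := by
    rw [inner_tmul, inner_coh_zero_right, inner_coh_zero_left, coh_apply, coh_apply,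
      cohFun_apply_zero, cohFun_apply_zero, Complex.conj_ofReal, ← Complex.ofReal_mul,
      ← Real.exp_add, hE]
    norm_num
    ring_nf
  have hψsq : ‖tmul (coh α) (coh 0) + tmul (coh 0) (coh β)‖ ^ 2 = 2 * (1 + E) := by
    have h := norm_add_sq (𝕜 := ℂ) (tmul (coh α) (coh 0)) (tmul (coh 0) (coh β))
    rw [hin12] at h
    have h11 : ‖tmul (coh α) (coh 0)‖ ^ 2 = 1 := by
      have := inner_self_eq_norm_sq (𝕜 := ℂ) (tmul (coh α) (coh 0))
      rw [hin11] at this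
      simpa using this.symm
    have h22 : ‖tmul (coh 0) (coh β)‖ ^ 2 = 1 := by
      have := inner_self_eq_norm_sq (𝕜 := ℂ) (tmul (coh 0) (coh β))
      rw [hin22] at this
      simpa using this.symm
    rw [h, h11, h22]
    simp [RCLike.ofReal_re]
    ring
  have hψn : ‖tmul (coh α) (coh 0) + tmul (coh 0) (coh β)‖ = Real.sqrt (2 * (1 + E)) := by
    rw [← hψsq, Real.sqrt_sq (norm_nonneg _)]
  have hAn : ‖A‖ * ‖tmul (coh α) (coh 0) + tmul (coh 0) (coh β)‖ = 1 := by
    have h := hnorm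
    rw [hφA, norm_smul] at h
    exact h
  have hψpos : (0:ℝ) < Real.sqrt (2 * (1 + E)) := by
    apply Real.sqrt_pos.mpr
    have := Real.exp_pos (-(‖α‖ ^ 2 + ‖β‖ ^ 2) / 2)
    rw [← hE] at this
    linarith
  refine ⟨A * (Real.sqrt (2 * (1 + E)) : ℂ), ?_, ?_⟩
  · rw [norm_mul, Complex.norm_real, Real.norm_eq_abs, abs_of_nonneg (Real.sqrt_nonneg _), ← hψn]
    exact hAn
  · rw [smul_smul]
    have hr : (Real.sqrt (2 * (1 + E)) : ℂ) ≠ 0 :=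
      Complex.ofReal_ne_zero.mpr (ne_of_gt hψpos)
    rw [mul_inv_cancel_right₀ hr]
    exact hφA
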